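/- Let b, d > 0, c ∈ ℝ, and define g(λ) = λ^{1/b} ((d/b) ln(1/λ))^{c/b} for small λ > 0. Then f(g(λ))/λ → 1 as λ → 0⁺, where f(μ) = μ^b (d ln(1/μ))^{−c}. -/

import Mathlib

open Filter Real

private lemma aux_one_sub (k : ℝ) :
    Filter.Tendsto (fun t : ℝ => 1 - k * (Real.log t / t)) atTop (nhds 1) := by
  have h0 : Filter.Tendsto (fun x : ℝ => Real.log x / x) atTop (nhds 0) :=
    Real.isLittleO_log_id_atTop.tendsto_div_nhds_zero
  have h := h0.const_mul k
  simpa using (tendsto_const_nhds (x := (1:ℝ)) (f := atTop)).sub h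

private lemma aux_sub_atTop (k : ℝ) :
    Filter.Tendsto (fun t : ℝ => t - k * Real.log t) atTop atTop := by
  have h := (tendsto_id : Filter.Tendsto id (atTop : Filter ℝ) atTop).atTop_mul_pos (by norm_num : (0:ℝ) < 1)
      (aux_one_sub k)
  refine h.congr' ?_
  filter_upwards [eventually_gt_atTop (0:ℝ)] with t ht
  have ht' : t ≠ 0 := ne_of_gt ht
  field_simp
  rfl

private lemma aux_ratio (k : ℝ) :
    Filter.Tendsto (fun t : ℝ => t / (t - k * Real.log t)) atTop (nhds 1) := by
  have h2 : Filter.Tendsto (fun t : ℝ => 1 / (1 - k * (Real.log t / t))) atTop (nhds 1) := by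
    simpa using (aux_one_sub k).inv₀ one_ne_zero
  refine h2.congr' ?_
  filter_upwards [eventually_gt_atTop (0:ℝ)] with t ht
  have ht' : t ≠ 0 := ne_of_gt ht
  have hrw : (1:ℝ) - k * (Real.log t / t) = (t - k * Real.log t) / t := by
    field_simp
  rw [hrw, one_div_div]

/-- `f(g(λ))/λ → 1` as `λ → 0⁺`, where
`f(μ) = μ^b (d ln(1/μ))^{-c}` and `g(λ) = λ^{1/b} ((d/b) ln(1/λ))^{c/b}`. -/
theorem stmt9 (b d c : ℝ) (hb : 0 < b) (hd : 0 < d) :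
    Filter.Tendsto
      (fun lam : ℝ =>
        (fun μ : ℝ => μ ^ b * (d * Real.log (1 / μ)) ^ (-c))
          (lam ^ (1 / b) * ((d / b) * Real.log (1 / lam)) ^ (c / b)) / lam)
      (nhdsWithin 0 (Set.Ioi 0)) (nhds 1) := by
  set L : ℝ → ℝ := fun lam => (d / b) * Real.log (1 / lam) with hLdef
  set k : ℝ := d * c / b with hkdef
  have hdb : 0 < d / b := div_pos hd hb
  have hL : Filter.Tendsto L (nhdsWithin 0 (Set.Ioi 0)) atTop := by
    have h1 : Filter.Tendsto (fun lam : ℝ => Real.log (1 / lam))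
        (nhdsWithin 0 (Set.Ioi 0)) atTop := by
      have := Real.tendsto_log_nhdsGT_zero
      have hneg : Filter.Tendsto (fun lam : ℝ => -Real.log lam)
          (nhdsWithin 0 (Set.Ioi 0)) atTop := tendsto_neg_atBot_atTop.comp this
      refine hneg.congr ?_
      intro x; rw [one_div, Real.log_inv]
    exact h1.const_mul_atTop hdb
  have hM : Filter.Tendsto (fun lam => L lam - k * Real.log (L lam))
      (nhdsWithin 0 (Set.Ioi 0)) atTop := (aux_sub_atTop k).comp hL
  have hratio : Filter.Tendsto (fun lam => L lam / (L lam - k * Real.log (L lam)))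
      (nhdsWithin 0 (Set.Ioi 0)) (nhds 1) := (aux_ratio k).comp hL
  have hpow : Filter.Tendsto (fun x : ℝ => x ^ c) (nhds 1) (nhds 1) := by
    simpa using (Real.continuousAt_rpow_const 1 c (Or.inl one_ne_zero)).tendsto
  have hfinal := hpow.comp hratio
  refine hfinal.congr' ?_
  filter_upwards [self_mem_nhdsWithin, hL.eventually_gt_atTop 0,
    hM.eventually_gt_atTop 0] with lam hlam hL0 hM0
  simp only [Set.mem_Ioi] at hlam
  have hlam' : lam ≠ 0 := ne_of_gt hlam
  have hL0' : L lam ≠ 0 := ne_of_gt hL0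
  set M : ℝ := L lam - k * Real.log (L lam) with hMdef
  have hgl : 0 < lam ^ (1 / b) := Real.rpow_pos_of_pos hlam _
  have hgr : 0 < (L lam) ^ (c / b) := Real.rpow_pos_of_pos hL0 _
  have hg : 0 < lam ^ (1 / b) * (L lam) ^ (c / b) := mul_pos hgl hgr
  show (fun x : ℝ => x ^ c) (L lam / M)
      = (lam ^ (1 / b) * (L lam) ^ (c / b)) ^ b *
      (d * Real.log (1 / (lam ^ (1 / b) * (L lam) ^ (c / b)))) ^ (-c) / lam
  refine Eq.symm ?_
  have hg1 : (lam ^ (1 / b) * (L lam) ^ (c / b)) ^ b = lam * (L lam) ^ c := by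
    rw [Real.mul_rpow hgl.le hgr.le, ← Real.rpow_mul hlam.le, ← Real.rpow_mul hL0.le,
      one_div_mul_cancel hb.ne', div_mul_cancel₀ c hb.ne', Real.rpow_one]
  have hlog : d * Real.log (1 / (lam ^ (1 / b) * (L lam) ^ (c / b))) = M := by
    rw [one_div, Real.log_inv, Real.log_mul (ne_of_gt hgl) (ne_of_gt hgr),
      Real.log_rpow hlam, Real.log_rpow hL0]
    have hLlam : L lam = (d / b) * (-Real.log lam) := by
      simp only [hLdef]; rw [one_div, Real.log_inv]
    rw [hMdef, hkdef, hLlam]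
    field_simp
    ring
  rw [hg1, hlog]
  simp only
  rw [Real.rpow_neg hM0.le, Real.div_rpow hL0.le hM0.le]
  field_simp
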